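/- For p ∈ (0,1], λ > 0, μ > 0 with λ < μ, define A_F(λ,μ,p) = (1 + 1/p)·(1/λ) + 1/μ + (2λ³ + λμ² − μλ²)/(μ⁴ − μ²λ²) and A_L(λ,μ,p) = (1 + 1/p)·(1/λ) + 1/(pμ). Then A_F(λ,μ,p) ≥ A_L(λ,μ,p) if and only if p ≥ (1 − ρ²)/(2ρ³ − 2ρ² + ρ + 1), where ρ = λ/μ. -/
import Mathlib


open Real

/-- Comparison of average AoPI under FCFS (`A_F`) and LCFSP (`A_L`) policies:
`A_F ≥ A_L` iff the recognition accuracy `p` exceeds the threshold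
`(1 - ρ²)/(2ρ³ - 2ρ² + ρ + 1)` where `ρ = λ/μ`. -/
theorem aopi_fcfs_ge_lcfsp_iff (lam mu p : ℝ) (hlam : 0 < lam) (hmu : 0 < mu)
    (hlm : lam < mu) (hp0 : 0 < p) (hp1 : p ≤ 1) :
    ((1 + 1 / p) * (1 / lam) + 1 / mu
        + (2 * lam ^ 3 + lam * mu ^ 2 - mu * lam ^ 2) / (mu ^ 4 - mu ^ 2 * lam ^ 2)
      ≥ (1 + 1 / p) * (1 / lam) + 1 / (p * mu))
    ↔ p ≥ (1 - (lam / mu) ^ 2)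
        / (2 * (lam / mu) ^ 3 - 2 * (lam / mu) ^ 2 + lam / mu + 1) := by
  have hs : 0 < mu ^ 2 - lam ^ 2 := by nlinarith
  have hρ0 : 0 < lam / mu := div_pos hlam hmu
  have hρ1 : lam / mu < 1 := (div_lt_one hmu).mpr hlm
  have hD : 0 < 2 * (lam / mu) ^ 3 - 2 * (lam / mu) ^ 2 + lam / mu + 1 := by
    nlinarith [mul_nonneg hρ0.le (sq_nonneg (2 * (lam / mu) - 1))]
  have hc1 : 0 < p * (mu ^ 2 * (mu ^ 2 - lam ^ 2)) := by positivity
  have hmu3 : 0 < mu ^ 3 := by positivity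
  have e1 : ((1 + 1 / p) * (1 / lam) + 1 / mu
        + (2 * lam ^ 3 + lam * mu ^ 2 - mu * lam ^ 2) / (mu ^ 4 - mu ^ 2 * lam ^ 2)
      ≥ (1 + 1 / p) * (1 / lam) + 1 / (p * mu))
      ↔ 0 ≤ p * (mu ^ 3 + lam * mu ^ 2 - 2 * mu * lam ^ 2 + 2 * lam ^ 3)
          - mu * (mu ^ 2 - lam ^ 2) := by
    rw [ge_iff_le, ← sub_nonneg]
    have h : ((1 + 1 / p) * (1 / lam) + 1 / mu
        + (2 * lam ^ 3 + lam * mu ^ 2 - mu * lam ^ 2) / (mu ^ 4 - mu ^ 2 * lam ^ 2))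
        - ((1 + 1 / p) * (1 / lam) + 1 / (p * mu))
        = (p * (mu ^ 3 + lam * mu ^ 2 - 2 * mu * lam ^ 2 + 2 * lam ^ 3)
            - mu * (mu ^ 2 - lam ^ 2)) / (p * (mu ^ 2 * (mu ^ 2 - lam ^ 2))) := by
      have hd : mu ^ 4 - mu ^ 2 * lam ^ 2 ≠ 0 := by nlinarith
      field_simp
      ring
    rw [h, le_div_iff₀ hc1, zero_mul]
  have e2 : (p ≥ (1 - (lam / mu) ^ 2)
        / (2 * (lam / mu) ^ 3 - 2 * (lam / mu) ^ 2 + lam / mu + 1))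
      ↔ 0 ≤ p * (mu ^ 3 + lam * mu ^ 2 - 2 * mu * lam ^ 2 + 2 * lam ^ 3)
          - mu * (mu ^ 2 - lam ^ 2) := by
    rw [ge_iff_le, div_le_iff₀ hD, ← sub_nonneg]
    have h : p * (2 * (lam / mu) ^ 3 - 2 * (lam / mu) ^ 2 + lam / mu + 1)
        - (1 - (lam / mu) ^ 2)
        = (p * (mu ^ 3 + lam * mu ^ 2 - 2 * mu * lam ^ 2 + 2 * lam ^ 3)
            - mu * (mu ^ 2 - lam ^ 2)) / mu ^ 3 := by
      field_simp
      ring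
    rw [h, le_div_iff₀ hmu3, zero_mul]
  rw [e1, e2]
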